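/- If X ⊆ ∏_{j<ω} Z_j, where each Z_j is compact Hausdorff and either second countable or a LOTS, then X is not weird. -/

import Mathlib

open Set Topology Classical

noncomputable section
namespace Stmt9Aux

variable {Y : Type*} [TopologicalSpace Y] {Z : ℕ → Type*} [∀ m : ℕ, TopologicalSpace (Z m)]

/-- One killing operation. -/
def kill1 (π : (m : ℕ) → Y → Z m) (p : (m : ℕ) × Set (Z m)) (R : Set Y) : Set Y :=
  if ((π p.1 ⁻¹' p.2) ∩ R).Nonempty then closure ((π p.1 ⁻¹' p.2) ∩ R) else R

lemma kill1_spec (π : (m : ℕ) → Y → Z m) (hπ : ∀ m, Continuous (π m))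
    (p : (m : ℕ) × Set (Z m)) (hp : IsOpen p.2) {R : Set Y} (hR : Perfect R) (hRn : R.Nonempty) :
    Perfect (kill1 π p R) ∧ (kill1 π p R).Nonempty ∧ kill1 π p R ⊆ R := by
  unfold kill1
  split_ifs with h
  · obtain ⟨x, hx⟩ := h
    have h2 := hR.closure_nhds_inter x hx.2 hx.1 (hp.preimage (hπ p.1))
    exact ⟨h2.1, h2.2, (hR.closed.closure_subset_iff).2 inter_subset_right⟩
  · exact ⟨hR, hRn, subset_rfl⟩

lemma kill1_inv (π : (m : ℕ) → Y → Z m) (hπ : ∀ m, Continuous (π m))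
    (p : (m : ℕ) × Set (Z m)) (R : Set Y) :
    (π p.1 '' kill1 π p R) ⊆ closure p.2 ∨ (π p.1 '' kill1 π p R) ∩ p.2 = ∅ := by
  unfold kill1
  split_ifs with h
  · left
    refine (image_closure_subset_closure_image (hπ p.1)).trans (closure_mono ?_)
    exact (image_inter_subset _ _ _).trans (inter_subset_left.trans (image_preimage_subset _ _))
  · right
    rw [not_nonempty_iff_eq_empty] at h
    ext y; simp only [mem_inter_iff, mem_image, mem_empty_iff_false, iff_false]
    rintro ⟨⟨z, hz, rfl⟩, hy2⟩
    exact Set.eq_empty_iff_forall_notMem.1 h z ⟨hy2, hz⟩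

/-- Fold of killing operations. -/
def foldKill (π : (m : ℕ) → Y → Z m) (ops : List ((m : ℕ) × Set (Z m))) (R : Set Y) : Set Y :=
  ops.foldr (kill1 π) R

lemma foldKill_spec (π : (m : ℕ) → Y → Z m) (hπ : ∀ m, Continuous (π m))
    {ops : List ((m : ℕ) × Set (Z m))} (hops : ∀ p ∈ ops, IsOpen p.2)
    {R : Set Y} (hR : Perfect R) (hRn : R.Nonempty) :
    Perfect (foldKill π ops R) ∧ (foldKill π ops R).Nonempty ∧ foldKill π ops R ⊆ R := by
  induction ops with
  | nil => exact ⟨hR, hRn, subset_rfl⟩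
  | cons q rest ih =>
    have ih' := ih (fun p hp => hops p (List.mem_cons_of_mem _ hp))
    have h1 := kill1_spec π hπ q (hops q (List.mem_cons_self)) ih'.1 ih'.2.1
    exact ⟨h1.1, h1.2.1, h1.2.2.trans ih'.2.2⟩

lemma foldKill_inv (π : (m : ℕ) → Y → Z m) (hπ : ∀ m, Continuous (π m))
    {ops : List ((m : ℕ) × Set (Z m))} (hops : ∀ p ∈ ops, IsOpen p.2)
    {R : Set Y} (hR : Perfect R) (hRn : R.Nonempty) :
    ∀ p ∈ ops, (π p.1 '' foldKill π ops R) ⊆ closure p.2 ∨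
      (π p.1 '' foldKill π ops R) ∩ p.2 = ∅ := by
  induction ops with
  | nil => intro p hp; cases hp
  | cons q rest ih =>
    intro p hp
    have ih' := foldKill_spec π hπ (fun p hp => hops p (List.mem_cons_of_mem _ hp)) hR hRn
    have hsub : foldKill π (q :: rest) R ⊆ foldKill π rest R :=
      (kill1_spec π hπ q (hops q (List.mem_cons_self)) ih'.1 ih'.2.1).2.2
    rcases List.mem_cons.1 hp with rfl | hp'
    · exact kill1_inv π hπ p _
    · rcases ih (fun p hp => hops p (List.mem_cons_of_mem _ hp)) p hp' with h | h
      · exact Or.inl ((image_mono hsub).trans h)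
      · exact Or.inr (eq_empty_of_subset_empty (h ▸ inter_subset_inter_left _ (image_mono hsub)))



/-- Lists of booleans of length exactly `n`. -/
def lenList : ℕ → List (List Bool)
  | 0 => [[]]
  | n+1 => (lenList n).flatMap (fun s => [false :: s, true :: s])

lemma mem_lenList {n : ℕ} {s : List Bool} : s ∈ lenList n ↔ s.length = n := by
  induction n generalizing s with
  | zero => simp [lenList, List.length_eq_zero_iff]
  | succ n ih =>
    simp only [lenList, List.mem_flatMap]
    constructor
    · rintro ⟨t, ht, hs⟩
      have h1 := ih.1 ht
      rcases List.mem_cons.1 hs with rfl | hs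
      · simp [h1]
      · rcases List.mem_cons.1 hs with rfl | hs
        · simp [h1]
        · cases hs
    · intro h
      cases s with
      | nil => simp at h
      | cons i t =>
        refine ⟨t, ih.2 (by simpa using h), ?_⟩
        cases i <;> simp

def nodesUpTo (n : ℕ) : List (List Bool) := (List.range (n+1)).flatMap lenList

lemma mem_nodesUpTo {n : ℕ} {s : List Bool} : s ∈ nodesUpTo n ↔ s.length ≤ n := by
  simp only [nodesUpTo, List.mem_flatMap, List.mem_range, mem_lenList]
  constructor
  · rintro ⟨k, hk, rfl⟩; omega
  · intro h; exact ⟨s.length, by omega, rfl⟩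

/-- All the construction data bundled. -/
structure Setup (Y : Type*) [TopologicalSpace Y] (Z : ℕ → Type*)
    [∀ m : ℕ, TopologicalSpace (Z m)] where
  π : (m : ℕ) → Y → Z m
  test : (m : ℕ) → ℕ → Set (Z m)
  dyn : (m : ℕ) → Z m → Set (Z m)
  P₀ : Set Y
  y₀ : Y

variable (S : Setup Y Z)

structure SetupHyps (S : Setup Y Z) : Prop where
  cont : ∀ m, Continuous (S.π m)
  testOpen : ∀ m k, IsOpen (S.test m k)
  dynOpen : ∀ m z, IsOpen (S.dyn m z)
  perf : Perfect S.P₀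
  ne : S.P₀.Nonempty
  mem : S.y₀ ∈ S.P₀

def killOps (n : ℕ) (ev : List Bool → Y) : List ((m : ℕ) × Set (Z m)) :=
  ((List.range n).flatMap fun m => (List.range n).map fun k => ⟨m, S.test m k⟩)
  ++ ((List.range n).flatMap fun m => (nodesUpTo n).map fun t => ⟨m, S.dyn m (S.π m (ev t))⟩)

lemma killOps_open (hS : SetupHyps S) (n : ℕ) (ev : List Bool → Y) :
    ∀ p ∈ killOps S n ev, IsOpen p.2 := by
  intro p hp
  rcases List.mem_append.1 hp with h | h <;>
    simp only [List.mem_flatMap, List.mem_map, List.mem_range] at h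
  · obtain ⟨m, _, k, _, rfl⟩ := h; exact hS.testOpen m k
  · obtain ⟨m, _, t, _, rfl⟩ := h; exact hS.dynOpen m _

lemma killOps_mem_static {n m k : ℕ} (hm : m < n) (hk : k < n) (ev : List Bool → Y) :
    (⟨m, S.test m k⟩ : (m : ℕ) × Set (Z m)) ∈ killOps S n ev :=
  List.mem_append.2 (Or.inl (List.mem_flatMap.2 ⟨m, List.mem_range.2 hm,
    List.mem_map.2 ⟨k, List.mem_range.2 hk, rfl⟩⟩))

lemma killOps_mem_dyn {n m : ℕ} {t : List Bool} (hm : m < n) (ht : t.length ≤ n)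
    (ev : List Bool → Y) :
    (⟨m, S.dyn m (S.π m (ev t))⟩ : (m : ℕ) × Set (Z m)) ∈ killOps S n ev :=
  List.mem_append.2 (Or.inr (List.mem_flatMap.2 ⟨m, List.mem_range.2 hm,
    List.mem_map.2 ⟨t, mem_nodesUpTo.2 ht, rfl⟩⟩))

variable [CompactSpace Y] [T2Space Y]

lemma split_exists (A : Set Y) : ∃ pr : Set Y × Set Y,
    (Perfect A ∧ A.Nonempty) → (Perfect pr.1 ∧ pr.1.Nonempty ∧ pr.1 ⊆ A) ∧
      (Perfect pr.2 ∧ pr.2.Nonempty ∧ pr.2 ⊆ A) ∧ Disjoint pr.1 pr.2 := by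
  by_cases h : Perfect A ∧ A.Nonempty
  · obtain ⟨C₀, C₁, h₀, h₁, hd⟩ := h.1.splitting h.2
    exact ⟨(C₀, C₁), fun _ => ⟨h₀, h₁, hd⟩⟩
  · exact ⟨(∅, ∅), fun hc => absurd hc h⟩

def splitPair (A : Set Y) : Set Y × Set Y := (split_exists A).choose

lemma splitPair_spec {A : Set Y} (h1 : Perfect A) (h2 : A.Nonempty) :
    (Perfect (splitPair A).1 ∧ (splitPair A).1.Nonempty ∧ (splitPair A).1 ⊆ A) ∧
      (Perfect (splitPair A).2 ∧ (splitPair A).2.Nonempty ∧ (splitPair A).2 ⊆ A) ∧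
      Disjoint (splitPair A).1 (splitPair A).2 :=
  (split_exists A).choose_spec ⟨h1, h2⟩

def pickPt (y₀ : Y) (A : Set Y) : Y := if h : A.Nonempty then h.choose else y₀

omit [TopologicalSpace Y] [CompactSpace Y] [T2Space Y] in
lemma pickPt_mem (y₀ : Y) {A : Set Y} (h : A.Nonempty) : pickPt y₀ A ∈ A := by
  rw [pickPt, dif_pos h]; exact h.choose_spec

def newSet (n : ℕ) (st : (List Bool → Set Y) × (List Bool → Y)) (i : Bool) (s' : List Bool) :
    Set Y :=
  if i then (splitPair (foldKill S.π (killOps S n st.2) (st.1 s'))).2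
  else (splitPair (foldKill S.π (killOps S n st.2) (st.1 s'))).1

def hist : ℕ → (List Bool → Set Y) × (List Bool → Y)
  | 0 => (fun s => if s = [] then S.P₀ else ∅, fun _ => S.y₀)
  | n+1 =>
    (fun s => match s with
      | [] => (hist n).1 []
      | i :: s' => if s'.length = n then newSet S n (hist n) i s' else (hist n).1 (i :: s'),
     fun s => match s with
      | [] => (hist n).2 []
      | i :: s' => if s'.length = n then pickPt S.y₀ (newSet S n (hist n) i s')
          else (hist n).2 (i :: s'))

def RR (s : List Bool) : Set Y := (hist S s.length).1 s

def ee (s : List Bool) : Y := (hist S s.length).2 s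

lemma hist_agree (n : ℕ) : ∀ s : List Bool, s.length ≤ n →
    (hist S n).1 s = RR S s ∧ (hist S n).2 s = ee S s := by
  induction n with
  | zero =>
    intro s hs
    have h : s = [] := List.length_eq_zero_iff.1 (Nat.le_zero.1 hs)
    subst h
    exact ⟨rfl, rfl⟩
  | succ n ih =>
    intro s hs
    cases s with
    | nil =>
      have h0 := ih [] (by simp)
      exact ⟨(by simpa [hist] using h0.1), (by simpa [hist] using h0.2)⟩
    | cons i s' =>
      by_cases hl : s'.length = n
      · constructor
        · show (hist S (n+1)).1 (i :: s') = (hist S (i :: s').length).1 (i :: s')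
          rw [List.length_cons, hl]
        · show (hist S (n+1)).2 (i :: s') = (hist S (i :: s').length).2 (i :: s')
          rw [List.length_cons, hl]
      · have hl2 : (i :: s').length ≤ n := by
          simp only [List.length_cons] at hs ⊢; omega
        have h0 := ih (i :: s') hl2
        have hl3 : ¬ (s'.length = n) := hl
        constructor
        · show (hist S (n+1)).1 (i :: s') = _
          simp only [hist, if_neg hl3]
          exact h0.1
        · show (hist S (n+1)).2 (i :: s') = _
          simp only [hist, if_neg hl3]
          exact h0.2

def QQ (s : List Bool) : Set Y :=
  foldKill S.π (killOps S s.length (hist S s.length).2) (RR S s)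

lemma RR_nil : RR S [] = S.P₀ := by simp [RR, hist]

lemma ee_nil : ee S [] = S.y₀ := rfl

lemma RR_cons (i : Bool) (s' : List Bool) :
    RR S (i :: s') = (if i then (splitPair (QQ S s')).2 else (splitPair (QQ S s')).1) := by
  show (hist S (s'.length + 1)).1 (i :: s') = _
  simp only [hist, if_pos rfl, newSet, QQ, RR, if_true]

lemma ee_cons (i : Bool) (s' : List Bool) :
    ee S (i :: s') = pickPt S.y₀ (RR S (i :: s')) := by
  show (hist S (s'.length + 1)).2 (i :: s') = _
  rw [RR_cons]
  simp only [hist, if_pos rfl, newSet, QQ, RR, if_true]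



lemma RR_spec (hS : SetupHyps S) : ∀ s : List Bool, Perfect (RR S s) ∧ (RR S s).Nonempty := by
  intro s
  induction s with
  | nil => rw [RR_nil]; exact ⟨hS.perf, hS.ne⟩
  | cons i s' ih =>
    have hQ := foldKill_spec S.π hS.cont (killOps_open S hS s'.length (hist S s'.length).2)
      ih.1 ih.2
    have hsp := splitPair_spec (A := QQ S s') hQ.1 hQ.2.1
    rw [RR_cons]
    cases i
    · simpa using ⟨hsp.1.1, hsp.1.2.1⟩
    · simpa using ⟨hsp.2.1.1, hsp.2.1.2.1⟩

lemma QQ_spec (hS : SetupHyps S) (s : List Bool) :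
    Perfect (QQ S s) ∧ (QQ S s).Nonempty ∧ QQ S s ⊆ RR S s :=
  foldKill_spec S.π hS.cont (killOps_open S hS s.length (hist S s.length).2)
    (RR_spec S hS s).1 (RR_spec S hS s).2

lemma RR_child_sub (hS : SetupHyps S) (i : Bool) (s' : List Bool) :
    RR S (i :: s') ⊆ QQ S s' := by
  have hQ := QQ_spec S hS s'
  have hsp := splitPair_spec (A := QQ S s') hQ.1 hQ.2.1
  rw [RR_cons]
  cases i
  · simpa using hsp.1.2.2
  · simpa using hsp.2.1.2.2

lemma RR_child_sub' (hS : SetupHyps S) (i : Bool) (s' : List Bool) :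
    RR S (i :: s') ⊆ RR S s' :=
  (RR_child_sub S hS i s').trans (QQ_spec S hS s').2.2

lemma RR_children_disjoint (hS : SetupHyps S) (s' : List Bool) :
    Disjoint (RR S (false :: s')) (RR S (true :: s')) := by
  have hQ := QQ_spec S hS s'
  have hsp := splitPair_spec (A := QQ S s') hQ.1 hQ.2.1
  rw [RR_cons, RR_cons]
  simpa using hsp.2.2

lemma ee_mem (hS : SetupHyps S) (s : List Bool) : ee S s ∈ RR S s := by
  cases s with
  | nil => rw [ee_nil, RR_nil]; exact hS.mem
  | cons i s' =>
    rw [ee_cons]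
    exact pickPt_mem _ (RR_spec S hS (i :: s')).2

lemma RR_suffix (hS : SetupHyps S) : ∀ {t s : List Bool}, s <:+ t → RR S t ⊆ RR S s := by
  intro t
  induction t with
  | nil => intro s h; rw [List.suffix_nil.1 h]
  | cons i t' ih =>
    intro s h
    rcases List.suffix_cons_iff.1 h with rfl | h'
    · exact subset_rfl
    · exact (RR_child_sub' S hS i t').trans (ih h')

lemma level_disjoint (hS : SetupHyps S) :
    ∀ {s t : List Bool}, s.length = t.length → s ≠ t → Disjoint (RR S s) (RR S t) := by
  intro s
  induction s with
  | nil =>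
    intro t h hne
    cases t with
    | nil => exact absurd rfl hne
    | cons j t' => simp at h
  | cons i s' ih =>
    intro t h hne
    cases t with
    | nil => simp at h
    | cons j t' =>
      by_cases hst : s' = t'
      · subst hst
        have hij : i ≠ j := fun he => hne (by rw [he])
        cases i <;> cases j
        · exact absurd rfl hij
        · exact RR_children_disjoint S hS s'
        · exact (RR_children_disjoint S hS s').symm
        · exact absurd rfl hij
      · exact (ih (by simpa using h) hst).mono (RR_child_sub' S hS i s')
          (RR_child_sub' S hS j t')

lemma QQ_inv (hS : SetupHyps S) (s : List Bool) :
    ∀ p ∈ killOps S s.length (hist S s.length).2,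
      (S.π p.1 '' QQ S s) ⊆ closure p.2 ∨ (S.π p.1 '' QQ S s) ∩ p.2 = ∅ :=
  foldKill_inv S.π hS.cont (killOps_open S hS s.length (hist S s.length).2)
    (RR_spec S hS s).1 (RR_spec S hS s).2



def brx (x : ℕ → Bool) : ℕ → List Bool
  | 0 => []
  | n+1 => x n :: brx x n

omit [TopologicalSpace Y] in
lemma brx_length (x : ℕ → Bool) (n : ℕ) : (brx x n).length = n := by
  induction n with
  | zero => rfl
  | succ n ih => simp [brx, ih]

omit [TopologicalSpace Y] in
lemma brx_suffix_le (x : ℕ → Bool) {n j : ℕ} (h : n ≤ j) : brx x n <:+ brx x j := by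
  induction j with
  | zero => have : n = 0 := by omega
            subst this; exact List.suffix_rfl
  | succ j ih =>
    rcases Nat.lt_or_ge n (j+1) with h' | h'
    · exact (ih (by omega)).trans (List.suffix_cons _ _)
    · have : n = j + 1 := by omega
      subst this; exact List.suffix_rfl

omit [TopologicalSpace Y] in
lemma brx_eq_of_agree {x x' : ℕ → Bool} {n : ℕ} (h : ∀ i < n, x i = x' i) :
    brx x n = brx x' n := by
  induction n with
  | zero => rfl
  | succ n ih =>
    show x n :: brx x n = x' n :: brx x' n
    rw [h n (by omega), ih (fun i hi => h i (by omega))]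

omit [TopologicalSpace Y] in
lemma brx_agree_of_eq {x x' : ℕ → Bool} {n : ℕ} (h : brx x n = brx x' n) :
    ∀ i < n, x i = x' i := by
  induction n with
  | zero => intro i hi; omega
  | succ n ih =>
    intro i hi
    have h2 : x n = x' n ∧ brx x n = brx x' n := by
      have := h
      simp only [brx] at this
      exact ⟨List.head_eq_of_cons_eq this, List.tail_eq_of_cons_eq this⟩
    rcases Nat.lt_or_ge i n with h' | h'
    · exact ih h2.2 i h'
    · have : i = n := by omega
      subst this; exact h2.1

def Eset (n : ℕ) : Set Y := {y | ∃ t : List Bool, n ≤ t.length ∧ ee S t = y}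

def Gn (n : ℕ) : Set Y := closure (Eset S n)

def G : Set Y := ⋂ n, Gn S n

lemma Gn_nonempty (n : ℕ) : (Gn S n).Nonempty :=
  ⟨ee S (List.replicate n false), subset_closure ⟨List.replicate n false, by simp, rfl⟩⟩

lemma Gn_antitone {n j : ℕ} (h : n ≤ j) : Gn S j ⊆ Gn S n :=
  closure_mono (fun y ⟨t, ht, he⟩ => ⟨t, by omega, he⟩)

omit [CompactSpace Y] [T2Space Y] in
lemma levelFinite (n : ℕ) : {s : List Bool | s.length = n}.Finite := by
  have : {s : List Bool | s.length = n} = {s | s ∈ lenList n} := by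
    ext s; simp [mem_lenList]
  rw [this]
  exact (lenList n).finite_toSet

lemma G_sub_nil (hS : SetupHyps S) : G S ⊆ RR S [] := by
  refine (iInter_subset _ 0).trans ?_
  rw [RR_nil]
  refine closure_minimal ?_ hS.perf.closed
  rintro y ⟨t, _, rfl⟩
  have h2 := RR_suffix S hS (s := []) (t := t) List.nil_suffix (ee_mem S hS t)
  rwa [RR_nil] at h2

lemma step_in_children (hS : SetupHyps S) {s : List Bool} {y : Y}
    (hy1 : y ∈ RR S s) (hy2 : y ∈ Gn S (s.length + 1)) :
    y ∈ RR S (false :: s) ∪ RR S (true :: s) := by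
  classical
  set n := s.length with hn
  set A : Set Y := {z | ∃ t : List Bool, (∃ i : Bool, (i :: s) <:+ t) ∧ ee S t = z} with hA
  set B : Set Y := {z | ∃ t : List Bool, n + 1 ≤ t.length ∧ ¬(∃ i : Bool, (i :: s) <:+ t) ∧
    ee S t = z} with hB
  have hEsub : Eset S (n+1) ⊆ A ∪ B := by
    rintro z ⟨t, ht, rfl⟩
    by_cases h : ∃ i : Bool, (i :: s) <:+ t
    · exact Or.inl ⟨t, h, rfl⟩
    · exact Or.inr ⟨t, ht, h, rfl⟩
  have hclA : closure A ⊆ RR S (false :: s) ∪ RR S (true :: s) := by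
    refine closure_minimal ?_ (((RR_spec S hS _).1.closed).union ((RR_spec S hS _).1.closed))
    rintro z ⟨t, ⟨i, hi⟩, rfl⟩
    have := RR_suffix S hS hi (ee_mem S hS t)
    cases i
    · exact Or.inl this
    · exact Or.inr this
  set I : Set (List Bool) :=
    {s' | s'.length = n + 1 ∧ s' ≠ false :: s ∧ s' ≠ true :: s} with hI
  have hIfin : I.Finite := (levelFinite (n+1)).subset (fun s' hs' => hs'.1)
  have hclB : closure B ⊆ ⋃ s' ∈ I, RR S s' := by
    refine closure_minimal ?_ (hIfin.isClosed_biUnion (fun s' _ => (RR_spec S hS s').1.closed))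
    rintro z ⟨t, ht, hnsuf, rfl⟩
    set s₁ := t.drop (t.length - (n+1)) with hs₁
    have hlen : s₁.length = n + 1 := by
      rw [hs₁, List.length_drop]; omega
    have hsuf : s₁ <:+ t := List.drop_suffix _ _
    have hne : ∀ i : Bool, s₁ ≠ i :: s := by
      intro i he
      exact hnsuf ⟨i, he ▸ hsuf⟩
    refine mem_biUnion ⟨hlen, hne false, hne true⟩ ?_
    exact RR_suffix S hS hsuf (ee_mem S hS t)
  have hy3 : y ∈ closure A ∪ closure B := by
    have : y ∈ closure (A ∪ B) := closure_mono hEsub hy2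
    rwa [closure_union] at this
  rcases hy3 with h | h
  · exact hclA h
  · exfalso
    obtain ⟨s', hs'I, hy4⟩ := mem_iUnion₂.1 (hclB h)
    cases s' with
    | nil => simp [hI] at hs'I
    | cons j s₂ =>
      by_cases hss : s₂ = s
      · subst hss
        cases j
        · exact hs'I.2.1 rfl
        · exact hs'I.2.2 rfl
      · have hdisj := level_disjoint S hS (s := s₂) (t := s)
          (by have := hs'I.1; simpa using this) hss
        exact (Set.disjoint_left.1 hdisj) (RR_child_sub' S hS j s₂ hy4) hy1

omit [CompactSpace Y] [T2Space Y] in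
lemma preconn_closed_or {C A B : Set Y} (hC : IsPreconnected C) (hsub : C ⊆ A ∪ B)
    (hA : IsClosed A) (hB : IsClosed B) (hd : Disjoint A B) : C ⊆ A ∨ C ⊆ B := by
  by_contra hcon
  push_neg at hcon
  obtain ⟨h1, h2⟩ := hcon
  have hsub' : C ⊆ Bᶜ ∪ Aᶜ := by
    intro y hy
    rcases hsub hy with h | h
    · exact Or.inl (fun hyB => (Set.disjoint_left.1 hd) h hyB)
    · exact Or.inr (fun hyA => (Set.disjoint_left.1 hd) hyA h)
  have hne1 : (C ∩ Bᶜ).Nonempty := by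
    obtain ⟨y, hy, hyB⟩ := not_subset.1 h2
    exact ⟨y, hy, hyB⟩
  have hne2 : (C ∩ Aᶜ).Nonempty := by
    obtain ⟨y, hy, hyA⟩ := not_subset.1 h1
    exact ⟨y, hy, hyA⟩
  obtain ⟨y, hyC, hyB, hyA⟩ := hC Bᶜ Aᶜ hB.isOpen_compl hA.isOpen_compl hsub' hne1 hne2
  rcases hsub hyC with h | h
  · exact hyA h
  · exact hyB h

lemma exists_branch (hS : SetupHyps S) {C : Set Y} (hCG : C ⊆ G S) (hC : IsPreconnected C) :
    ∃ x : ℕ → Bool, ∀ n, C ⊆ RR S (brx x n) := by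
  classical
  have hC0 : C ⊆ RR S [] := hCG.trans (G_sub_nil S hS)
  have hstep : ∀ s : List Bool, C ⊆ RR S s →
      C ⊆ RR S (false :: s) ∨ C ⊆ RR S (true :: s) := by
    intro s hs
    have hsub : C ⊆ RR S (false :: s) ∪ RR S (true :: s) := by
      intro y hy
      exact step_in_children S hS (hs hy)
        (mem_iInter.1 (hCG hy) (s.length + 1))
    exact preconn_closed_or hC hsub (RR_spec S hS _).1.closed (RR_spec S hS _).1.closed
      (RR_children_disjoint S hS s)
  let bit : List Bool → Bool := fun s => if C ⊆ RR S (false :: s) then false else true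
  let g : ℕ → List Bool := fun n => Nat.rec [] (fun _ s => bit s :: s) n
  have hg : ∀ n, C ⊆ RR S (g n) := by
    intro n
    induction n with
    | zero => exact hC0
    | succ n ih =>
      show C ⊆ RR S (bit (g n) :: g n)
      by_cases h : C ⊆ RR S (false :: g n)
      · have hb : bit (g n) = false := if_pos h
        rw [hb]; exact h
      · have hb : bit (g n) = true := if_neg h
        rw [hb]; exact (hstep (g n) ih).resolve_left h
  refine ⟨fun n => bit (g n), ?_⟩
  have hbrx : ∀ n, brx (fun n => bit (g n)) n = g n := by
    intro n
    induction n with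
    | zero => rfl
    | succ n ih =>
      show bit (g n) :: brx (fun n => bit (g n)) n = bit (g n) :: g n
      rw [ih]
  intro n
  rw [hbrx n]
  exact hg n

def Kx (x : ℕ → Bool) : Set Y := ⋂ n, RR S (brx x n)

lemma G_full (hS : SetupHyps S) (x : ℕ → Bool) : (G S ∩ Kx S x).Nonempty := by
  set V : ℕ → Set Y := fun n => closure {y | ∃ j, n ≤ j ∧ ee S (brx x j) = y} with hV
  have hVc : ∀ n, IsClosed (V n) := fun n => isClosed_closure
  have hVn : ∀ n, (V n).Nonempty := fun n =>
    ⟨ee S (brx x n), subset_closure ⟨n, le_rfl, rfl⟩⟩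
  have hVd : ∀ n, V (n+1) ⊆ V n :=
    fun n => closure_mono (fun y ⟨j, hj, he⟩ => ⟨j, by omega, he⟩)
  obtain ⟨z, hz⟩ := IsCompact.nonempty_iInter_of_sequence_nonempty_isCompact_isClosed V hVd hVn
    ((hVc 0).isCompact) hVc
  have hz' := mem_iInter.1 hz
  refine ⟨z, mem_iInter.2 (fun n => ?_), mem_iInter.2 (fun n => ?_)⟩
  · refine Gn_antitone S (le_refl n) (closure_mono ?_ (hz' n))
    rintro y ⟨j, hj, rfl⟩
    exact ⟨brx x j, by rw [brx_length]; omega, rfl⟩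
  · refine closure_minimal ?_ (RR_spec S hS _).1.closed (hz' n)
    rintro y ⟨j, hj, rfl⟩
    exact RR_suffix S hS (brx_suffix_le x hj) (ee_mem S hS _)



theorem G_totallyDisconnected (hS : SetupHyps S)
    (hsep : ∀ a b : Y, (∀ m, S.π m a = S.π m b) → a = b)
    (hcase : ∀ m, (∀ a b : Z m, a ≠ b → ∃ k, a ∈ S.test m k ∧ b ∉ closure (S.test m k)) ∨
      ∃ l : LinearOrder (Z m), ∃ _ : @OrderTopology (Z m) _ l.toPartialOrder.toPreorder,
        ∀ z : Z m, S.dyn m z = @Set.Ioi (Z m) l.toPartialOrder.toPreorder z) :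
    IsTotallyDisconnected (G S) := by
  intro C hCG hC
  intro a ha b hb
  by_contra hab
  obtain ⟨x, hx⟩ := exists_branch S hS hCG hC
  have hm : ∃ m, S.π m a ≠ S.π m b := by
    by_contra h; push_neg at h; exact hab (hsep a b h)
  obtain ⟨m, hm⟩ := hm
  have hCQ : ∀ j, C ⊆ QQ S (brx x j) := by
    intro j
    have h1 : C ⊆ RR S (brx x (j+1)) := hx (j+1)
    exact h1.trans (RR_child_sub S hS (x j) (brx x j))
  rcases hcase m with hstat | hlots
  · obtain ⟨k, hk1, hk2⟩ := hstat _ _ hm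
    set j := max m k + 1 with hj
    have hmem : (⟨m, S.test m k⟩ : (m : ℕ) × Set (Z m)) ∈
        killOps S (brx x j).length (hist S (brx x j).length).2 := by
      rw [brx_length]; exact killOps_mem_static S (by omega) (by omega) _
    rcases QQ_inv S hS (brx x j) _ hmem with h | h
    · exact hk2 (h ⟨b, hCQ j hb, rfl⟩)
    · have hmem2 : S.π m a ∈ (S.π m '' QQ S (brx x j)) ∩ S.test m k :=
        ⟨⟨a, hCQ j ha, rfl⟩, hk1⟩
      rw [h] at hmem2
      exact notMem_empty _ hmem2
  · obtain ⟨l, hOT, hIoi⟩ := hlots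
    letI := l
    letI := hOT
    have main : ∀ c d : Y, c ∈ C → d ∈ C → S.π m c < S.π m d → False := by
      intro c d hc hd hcd
      have hcover : C ⊆ (S.π m ⁻¹' (Iio (S.π m d))) ∪ (S.π m ⁻¹' (Ioi (S.π m c))) := by
        intro y hy
        rcases lt_or_ge (S.π m y) (S.π m d) with h' | h'
        · exact Or.inl h'
        · exact Or.inr (lt_of_lt_of_le hcd h')
      obtain ⟨y, hyC, hy1, hy2⟩ := hC (S.π m ⁻¹' (Iio (S.π m d))) (S.π m ⁻¹' (Ioi (S.π m c)))
        (isOpen_Iio.preimage (hS.cont m)) (isOpen_Ioi.preimage (hS.cont m)) hcover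
        ⟨c, hc, hcd⟩ ⟨d, hd, hcd⟩
      have hyG : y ∈ Gn S 0 := mem_iInter.1 (hCG hyC) 0
      have hop : IsOpen (S.π m ⁻¹' (Ioo (S.π m c) (S.π m d))) :=
        isOpen_Ioo.preimage (hS.cont m)
      obtain ⟨w, hw1, hw2⟩ := mem_closure_iff.1 hyG _ hop ⟨hy2, hy1⟩
      obtain ⟨t, -, rfl⟩ := hw2
      set v := S.π m (ee S t) with hv
      have hvIoo : v ∈ Ioo (S.π m c) (S.π m d) := hw1
      set j := max t.length m + 1 with hj
      have hagree : (hist S (brx x j).length).2 t = ee S t := by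
        rw [brx_length]; exact (hist_agree S j t (by omega)).2
      have hmem : (⟨m, S.dyn m v⟩ : (m : ℕ) × Set (Z m)) ∈
          killOps S (brx x j).length (hist S (brx x j).length).2 := by
        have h0 := killOps_mem_dyn S (n := (brx x j).length) (m := m) (t := t)
          (by rw [brx_length]; omega) (by rw [brx_length]; omega)
          (hist S (brx x j).length).2
        rwa [hagree] at h0
      rcases QQ_inv S hS (brx x j) _ hmem with h | h
      · have h1 : S.π m c ∈ closure (S.dyn m v) := h ⟨c, hCQ j hc, rfl⟩
        rw [hIoi] at h1
        have h2 : v ≤ S.π m c :=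
          (closure_minimal Ioi_subset_Ici_self isClosed_Ici) h1
        exact absurd hvIoo.1 (not_lt.2 h2)
      · have h1 : S.π m d ∈ (S.π m '' QQ S (brx x j)) ∩ S.dyn m v :=
          ⟨⟨d, hCQ j hd, rfl⟩, by rw [hIoi]; exact hvIoo.2⟩
        rw [h] at h1
        exact notMem_empty _ h1
    rcases lt_or_gt_of_ne hm with h | h
    · exact main a b ha hb h
    · exact main b a hb ha h



lemma G_isClosed : IsClosed (G S) := isClosed_iInter (fun _ => isClosed_closure)

lemma Kx_isClosed (hS : SetupHyps S) (x : ℕ → Bool) : IsClosed (Kx S x) :=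
  isClosed_iInter (fun n => (RR_spec S hS _).1.closed)

theorem exists_perfect_td (hS : SetupHyps S)
    (hsep : ∀ a b : Y, (∀ m, S.π m a = S.π m b) → a = b)
    (hcase : ∀ m, (∀ a b : Z m, a ≠ b → ∃ k, a ∈ S.test m k ∧ b ∉ closure (S.test m k)) ∨
      ∃ l : LinearOrder (Z m), ∃ _ : @OrderTopology (Z m) _ l.toPartialOrder.toPreorder,
        ∀ z : Z m, S.dyn m z = @Set.Ioi (Z m) l.toPartialOrder.toPreorder z) :
    ∃ H : Set Y, Perfect H ∧ H.Nonempty ∧ IsTotallyDisconnected H := by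
  classical
  set F : Set (Set Y) :=
    {H | H ⊆ G S ∧ IsClosed H ∧ ∀ x : ℕ → Bool, (H ∩ Kx S x).Nonempty} with hF
  have hGF : G S ∈ F := ⟨subset_rfl, G_isClosed S, fun x => G_full S hS x⟩
  have hchainlem : ∀ c ⊆ F, IsChain (· ⊆ ·) c → c.Nonempty → ∃ lb ∈ F, ∀ s ∈ c, lb ⊆ s := by
    intro c hcF hchain hcne
    haveI : Nonempty c := hcne.to_subtype
    refine ⟨⋂₀ c, ⟨?_, ?_, ?_⟩, fun s hs => sInter_subset_of_mem hs⟩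
    · obtain ⟨H0, hH0⟩ := hcne
      exact (sInter_subset_of_mem hH0).trans (hcF hH0).1
    · exact isClosed_sInter (fun H hH => (hcF hH).2.1)
    · intro x
      have hdir : Directed (· ⊇ ·) (fun H : c => (H : Set Y) ∩ Kx S x) := by
        intro H1 H2
        rcases hchain.total H1.2 H2.2 with h | h
        · exact ⟨H1, subset_rfl, inter_subset_inter_left _ h⟩
        · exact ⟨H2, inter_subset_inter_left _ h, subset_rfl⟩
      have hne := IsCompact.nonempty_iInter_of_directed_nonempty_isCompact_isClosed
        (fun H : c => (H : Set Y) ∩ Kx S x) hdir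
        (fun H => (hcF H.2).2.2 x)
        (fun H => (((hcF H.2).2.1).inter (Kx_isClosed S hS x)).isCompact)
        (fun H => ((hcF H.2).2.1).inter (Kx_isClosed S hS x))
      have heq : (⋂ H : c, ((H : Set Y) ∩ Kx S x)) = (⋂₀ c) ∩ Kx S x := by
        rw [sInter_eq_iInter, iInter_inter]
      rwa [heq] at hne
  obtain ⟨H, hHsub, hHmin⟩ := zorn_superset_nonempty F hchainlem (G S) hGF
  have hHF : H ∈ F := hHmin.1
  refine ⟨H, ⟨hHF.2.1, ?_⟩, ?_, ?_⟩
  · -- accumulation points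
    intro x₀ hx₀
    by_contra hacc
    rw [accPt_iff_nhds] at hacc
    push_neg at hacc
    obtain ⟨U, hU, hUx⟩ := hacc
    have hUx' : ∀ y, y ∈ U ∩ H → y = x₀ := by
      intro y hy
      by_contra hne
      exact hne (hUx y hy)
    set U₀ := interior U with hU₀
    have hx₀U₀ : x₀ ∈ U₀ := mem_interior_iff_mem_nhds.2 hU
    obtain ⟨xs, hxs⟩ := exists_branch S hS (C := {x₀})
      (singleton_subset_iff.2 (hHF.1 hx₀)) isPreconnected_singleton
    have hx₀K : x₀ ∈ Kx S xs := mem_iInter.2 (fun n => hxs n rfl)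
    set H' := H \ U₀ with hH'
    have hH'cl : IsClosed H' := hHF.2.1.sdiff isOpen_interior
    have hH'sub : H' ⊆ G S := diff_subset.trans hHF.1
    have hH'nF : H' ∉ F := by
      intro hmem
      have hHH' := hHmin.2 hmem diff_subset
      exact (hHH' hx₀).2 hx₀U₀
    have hex : ∃ xh, ¬ (H' ∩ Kx S xh).Nonempty := by
      by_contra hall
      push_neg at hall
      exact hH'nF ⟨hH'sub, hH'cl, hall⟩
    obtain ⟨xh, hxh⟩ := hex
    have hsub1 : H ∩ Kx S xh ⊆ {x₀} := by
      intro z hz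
      by_contra hzx
      have hzU₀ : z ∉ U₀ := fun hzU => hzx (hUx' z ⟨interior_subset hzU, hz.1⟩)
      exact hxh ⟨z, ⟨hz.1, hzU₀⟩, hz.2⟩
    have hx₀Kh : x₀ ∈ Kx S xh := by
      obtain ⟨z, hz⟩ := hHF.2.2 xh
      have hz0 : z = x₀ := hsub1 hz
      rw [hz0] at hz
      exact hz.2
    have hxeq : xh = xs := by
      by_contra hne
      have hi : ∃ i, xh i ≠ xs i := by
        by_contra hh; push_neg at hh; exact hne (funext hh)
      obtain ⟨i, hi⟩ := hi
      have hdiff : brx xh (i+1) ≠ brx xs (i+1) :=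
        fun he => hi (brx_agree_of_eq he i (by omega))
      have hdisj := level_disjoint S hS (s := brx xh (i+1)) (t := brx xs (i+1))
        (by rw [brx_length, brx_length]) hdiff
      exact (Set.disjoint_left.1 hdisj) (mem_iInter.1 hx₀Kh (i+1)) (mem_iInter.1 hx₀K (i+1))
    subst hxeq
    have hyj : ∀ j : ℕ, ∃ y, y ∈ H ∧ y ∈ RR S (brx xh j) ∧ y ≠ x₀ ∧ y ∉ U₀ := by
      intro j
      set x' : ℕ → Bool := fun i => if i = j then !(xh i) else xh i with hx'
      obtain ⟨y, hyH, hyK⟩ := hHF.2.2 x'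
      have hagree : ∀ i < j, x' i = xh i := by
        intro i hi2
        simp only [hx']
        rw [if_neg (by omega)]
      have hyR : y ∈ RR S (brx xh j) := by
        have h1 := mem_iInter.1 hyK j
        rwa [brx_eq_of_agree hagree] at h1
      have hyne : y ≠ x₀ := by
        intro he
        subst he
        have h1 := mem_iInter.1 hyK (j+1)
        have h2 := hxs (j+1) rfl
        have hdiff : brx x' (j+1) ≠ brx xh (j+1) := by
          intro he2
          have h3 := brx_agree_of_eq he2 j (by omega)
          simp only [hx', if_pos rfl] at h3
          exact (Bool.not_ne_self (xh j)) h3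
        exact (Set.disjoint_left.1 (level_disjoint S hS
          (by rw [brx_length, brx_length]) hdiff)) h1 h2
      have hyU : y ∉ U₀ := fun hyU₀ => hyne (hUx' y ⟨interior_subset hyU₀, hyH⟩)
      exact ⟨y, hyH, hyR, hyne, hyU⟩
    choose yy hy1 hy2 hy3 hy4 using hyj
    set W : ℕ → Set Y := fun n => closure {z | ∃ j, n ≤ j ∧ yy j = z} with hW
    obtain ⟨z, hz⟩ := IsCompact.nonempty_iInter_of_sequence_nonempty_isCompact_isClosed W
      (fun n => closure_mono (fun z ⟨j, hj, he⟩ => ⟨j, by omega, he⟩))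
      (fun n => ⟨yy n, subset_closure ⟨n, le_rfl, rfl⟩⟩) (isClosed_closure.isCompact)
      (fun n => isClosed_closure)
    have hzH : z ∈ H := by
      have h1 := mem_iInter.1 hz 0
      refine closure_minimal ?_ hHF.2.1 h1
      rintro w ⟨j, -, rfl⟩
      exact hy1 j
    have hzK : z ∈ Kx S xh := by
      refine mem_iInter.2 (fun n => ?_)
      have h1 := mem_iInter.1 hz n
      refine closure_minimal ?_ (RR_spec S hS _).1.closed h1
      rintro w ⟨j, hj, rfl⟩
      exact RR_suffix S hS (brx_suffix_le xh hj) (hy2 j)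
    have hzx₀ : z = x₀ := hsub1 ⟨hzH, hzK⟩
    have hx₀cl : x₀ ∈ closure {w | ∃ j, 0 ≤ j ∧ yy j = w} := hzx₀ ▸ mem_iInter.1 hz 0
    obtain ⟨w, hwU, hwmem⟩ := mem_closure_iff.1 hx₀cl U₀ isOpen_interior hx₀U₀
    obtain ⟨j, -, rfl⟩ := hwmem
    exact hy4 j hwU
  · obtain ⟨z, hz⟩ := hHF.2.2 (fun _ => false)
    exact ⟨z, hz.1⟩
  · intro t ht hpc
    exact G_totallyDisconnected S hS hsep hcase t (ht.trans hHF.1) hpc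

end Stmt9Aux
end


/-- A space is scattered iff every nonempty subset has a point isolated in it. -/
def ScatteredSpace (X : Type*) [TopologicalSpace X] : Prop :=
  ∀ S : Set X, S.Nonempty → ∃ x ∈ S, ∃ U : Set X, IsOpen U ∧ U ∩ S = {x}

/-- A space is weird iff it is compact Hausdorff, not scattered, and no subset
is simultaneously perfect (closed, nonempty, no isolated points) and totally
disconnected. -/
def Weird (X : Type*) [TopologicalSpace X] : Prop :=
  CompactSpace X ∧ T2Space X ∧ ¬ ScatteredSpace X ∧
    ∀ P : Set X, Perfect P → P.Nonempty → ¬ IsTotallyDisconnected P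

theorem stmt9 (Z : ℕ → Type*) [∀ j, TopologicalSpace (Z j)]
    [∀ j, CompactSpace (Z j)] [∀ j, T2Space (Z j)]
    (hZ : ∀ j, SecondCountableTopology (Z j) ∨
      ∃ l : LinearOrder (Z j), @OrderTopology (Z j) _ l.toPartialOrder.toPreorder)
    (X : Set (∀ j, Z j)) : ¬ Weird X := by
  classical
  rintro ⟨hcomp, ht2, hnsc, hnoperf⟩
  haveI := hcomp
  haveI := ht2
  -- extract a dense-in-itself set from non-scatteredness
  rw [ScatteredSpace] at hnsc
  push_neg at hnsc
  obtain ⟨S0, hS0ne, hS0⟩ := hnsc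
  have hpre : Preperfect S0 := by
    intro x hx
    rw [accPt_iff_nhds]
    intro U hU
    obtain ⟨V, hVU, hVopen, hxV⟩ := mem_nhds_iff.1 hU
    have hne := hS0 x hx V hVopen
    by_contra hcon
    push_neg at hcon
    apply hne
    ext y
    constructor
    · intro hy
      have h2 : y ∈ U ∩ S0 := ⟨hVU hy.1, hy.2⟩
      have h3 := hcon y h2
      simpa using h3
    · intro hy
      have h4 : y = x := hy
      subst h4
      exact ⟨hxV, hx⟩
  have hP : Perfect (closure S0) := hpre.perfect_closure
  -- data for each coordinate
  have hdata : ∀ m, ∃ (test : ℕ → Set (Z m)) (dyn : Z m → Set (Z m)),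
      (∀ k, IsOpen (test k)) ∧ (∀ z, IsOpen (dyn z)) ∧
      ((∀ a b : Z m, a ≠ b → ∃ k, a ∈ test k ∧ b ∉ closure (test k)) ∨
        ∃ l : LinearOrder (Z m), ∃ _ : @OrderTopology (Z m) _ l.toPartialOrder.toPreorder,
          ∀ z, dyn z = @Set.Ioi (Z m) l.toPartialOrder.toPreorder z) := by
    intro m
    rcases hZ m with hsc | hlots
    · haveI := hsc
      obtain ⟨b, hbc, -, hbasis⟩ := TopologicalSpace.exists_countable_basis (Z m)
      have hcnt : (insert (∅ : Set (Z m)) b).Countable := hbc.insert _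
      obtain ⟨f, hf⟩ := hcnt.exists_eq_range ⟨∅, Set.mem_insert _ _⟩
      refine ⟨f, fun _ => ∅, ?_, fun _ => isOpen_empty, Or.inl ?_⟩
      · intro k
        have hk : f k ∈ insert (∅ : Set (Z m)) b := by
          rw [hf]; exact Set.mem_range_self k
        rcases hk with h | h
        · rw [h]; exact isOpen_empty
        · exact hbasis.isOpen h
      · intro a b' hab
        obtain ⟨U, V, hUo, hVo, haU, hbV, hUV⟩ := t2_separation hab
        obtain ⟨B, hBb, haB, hBU⟩ := hbasis.exists_subset_of_mem_open haU hUo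
        have hBmem : B ∈ insert (∅ : Set (Z m)) b := Set.mem_insert_of_mem _ hBb
        rw [hf] at hBmem
        obtain ⟨k, hk⟩ := hBmem
        refine ⟨k, ?_, ?_⟩
        · rw [hk]; exact haB
        · rw [hk]
          intro hcl
          have hclU : closure B ⊆ Vᶜ := by
            refine closure_minimal (hBU.trans ?_) hVo.isClosed_compl
            intro y hy hyV
            exact (Set.disjoint_left.1 hUV) hy hyV
          exact hclU hcl hbV
    · obtain ⟨l, hOT⟩ := hlots
      letI := l
      letI := hOT
      exact ⟨fun _ => ∅, fun z => Set.Ioi z, fun _ => isOpen_empty, fun _ => isOpen_Ioi,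
        Or.inr ⟨l, hOT, fun _ => rfl⟩⟩
  choose testf dynf htest hdyn hcase using hdata
  obtain ⟨y₀, hy₀⟩ := hS0ne
  let Sp : Stmt9Aux.Setup ↥X Z :=
    { π := fun m y => (y : ∀ j, Z j) m
      test := testf
      dyn := dynf
      P₀ := closure S0
      y₀ := y₀ }
  have hSH : Stmt9Aux.SetupHyps Sp :=
    { cont := fun m => (continuous_apply m).comp continuous_subtype_val
      testOpen := htest
      dynOpen := hdyn
      perf := hP
      ne := ⟨y₀, subset_closure hy₀⟩
      mem := subset_closure hy₀ }
  obtain ⟨H, hH1, hH2, hH3⟩ := Stmt9Aux.exists_perfect_td Sp hSH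
    (fun a b hab => Subtype.ext (funext (fun m => hab m))) hcase
  exact hnoperf H hH1 hH2 hH3
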